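/- If Γ is a simple digraph with a zero forcing set B such that th(Γ;B) ≤ t, setting a = |B| and b = t − a, then Γ is a minor of H_{a,b+1} obtainable by contracting path arcs and deleting non-path arcs; conversely, if Γ is obtained from some H_{a,b+1} with a + b = t by contracting path arcs and deleting non-path arcs, then th(Γ) ≤ t. -/
import Mathlib


open Set

/-- One time step of standard zero forcing on a digraph with arc relation `A`:
every blue vertex having a unique white out-neighbor forces it blue. -/
def dstep {V : Type*} (A : V → V → Prop) (S : Set V) : Set V :=
  S ∪ {w | ∃ u ∈ S, A u w ∧ ∀ x, A u x → x ∉ S → x = w}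

/-- `B` is a zero forcing set of the digraph with arc relation `A`. -/
def IsZFS {V : Type*} (A : V → V → Prop) (B : Set V) : Prop :=
  ∃ t, (dstep A)^[t] B = Set.univ

/-- Propagation time of `B` in the digraph with arc relation `A`. -/
noncomputable def dpt {V : Type*} (A : V → V → Prop) (B : Set V) : ℕ :=
  sInf {t | (dstep A)^[t] B = Set.univ}

/-- The throttling number of the digraph with arc relation `A`. -/
noncomputable def dth {V : Type*} (A : V → V → Prop) : ℕ :=
  sInf {k | ∃ B : Set V, IsZFS A B ∧ k = B.ncard + dpt A B}

/-- The arcs of the host digraph `H_{a,b+1}`: all arcs between distinct vertices of the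
`a × (b+1)` array except forward diagonal arcs and forward horizontal arcs skipping a
column. -/
def HArc (a b : ℕ) (p q : Fin a × Fin (b + 1)) : Prop :=
  p ≠ q ∧ ((q.2 : ℕ) ≤ (p.2 : ℕ) ∨ (p.1 = q.1 ∧ (q.2 : ℕ) = (p.2 : ℕ) + 1))

/-- Path arcs of `H_{a,b+1}`. -/
def IsPathArc {a b : ℕ} (p q : Fin a × Fin (b + 1)) : Prop :=
  p.1 = q.1 ∧ (q.2 : ℕ) = (p.2 : ℕ) + 1

/-- `Γ` (with arc relation `A`) can be obtained from `H_{a,b+1}` by contracting path arcs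
and deleting non-path arcs.  The map `φ` collapses each contracted horizontal segment of a
row to a single vertex of `Γ`. -/
def ObtainedFromH {V : Type*} (A : V → V → Prop) (a b : ℕ) : Prop :=
  ∃ φ : Fin a × Fin (b + 1) → V,
    Function.Surjective φ ∧
    (∀ p q, φ p = φ q → p.1 = q.1) ∧
    (∀ p q r, φ p = φ q → r.1 = p.1 → (p.2 : ℕ) ≤ (r.2 : ℕ) → (r.2 : ℕ) ≤ (q.2 : ℕ) →
      φ r = φ p) ∧
    (∀ x y, A x y → ∃ p q, φ p = x ∧ φ q = y ∧ φ p ≠ φ q ∧ HArc a b p q) ∧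
    (∀ p q, IsPathArc p q → φ p = φ q ∨ A (φ p) (φ q))

section Aux

variable {V : Type*} (A : V → V → Prop) (B : Set V)

lemma subset_dstep (S : Set V) : S ⊆ dstep A S := Set.subset_union_left

lemma dstep_mono {S T : Set V} (h : S ⊆ T) : dstep A S ⊆ dstep A T := by
  rintro w hw
  rcases hw with hw | ⟨u, hu, hA, huniq⟩
  · exact Or.inl (h hw)
  · exact Or.inr ⟨u, h hu, hA, fun x hx hxT => huniq x hx (fun hxS => hxT (h hxS))⟩

lemma iter_le {j k : ℕ} (h : j ≤ k) : (dstep A)^[j] B ⊆ (dstep A)^[k] B := by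
  induction k, h using Nat.le_induction with
  | base => exact subset_rfl
  | succ k hk ih =>
      refine ih.trans ?_
      rw [Function.iterate_succ_apply']
      exact subset_dstep A _

noncomputable def tauF (v : V) : ℕ := sInf {j | v ∈ (dstep A)^[j] B}

variable {A B}

lemma tau_le_of_mem {v : V} {j : ℕ} (h : v ∈ (dstep A)^[j] B) : tauF A B v ≤ j :=
  Nat.sInf_le h

variable {b : ℕ}

lemma mem_tau (hb : (dstep A)^[b] B = Set.univ) (v : V) :
    v ∈ (dstep A)^[tauF A B v] B := by
  have h : tauF A B v ∈ {j | v ∈ (dstep A)^[j] B} :=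
    Nat.sInf_mem ⟨b, show v ∈ (dstep A)^[b] B by rw [hb]; exact Set.mem_univ v⟩
  exact h

lemma tau_le (hb : (dstep A)^[b] B = Set.univ) (v : V) : tauF A B v ≤ b :=
  Nat.sInf_le (show v ∈ (dstep A)^[b] B by rw [hb]; exact Set.mem_univ v)

lemma mem_of_tau_le (hb : (dstep A)^[b] B = Set.univ) {v : V} {j : ℕ}
    (h : tauF A B v ≤ j) : v ∈ (dstep A)^[j] B :=
  iter_le A B h (mem_tau hb v)

lemma notMem_of_lt_tau {v : V} {j : ℕ} (h : j < tauF A B v) :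
    v ∉ (dstep A)^[j] B :=
  fun hm => absurd (tau_le_of_mem hm) (by omega)

lemma tau_eq_zero {v : V} (h : v ∈ B) : tauF A B v = 0 :=
  Nat.le_zero.mp (tau_le_of_mem (show v ∈ (dstep A)^[0] B from h))

lemma mem_B_of_tau (hb : (dstep A)^[b] B = Set.univ) {v : V}
    (h : tauF A B v = 0) : v ∈ B := by
  have := mem_tau hb v
  rwa [h, Function.iterate_zero_apply] at this

variable (A B)

def Espec (v : V) : Prop :=
  ∃ u, u ∈ (dstep A)^[tauF A B v - 1] B ∧ A u v ∧
    ∀ x, A u x → x ∉ (dstep A)^[tauF A B v - 1] B → x = v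

open scoped Classical in
noncomputable def frc (v : V) : V :=
  if v ∈ B then v else if h : Espec A B v then h.choose else v

variable {A B}

lemma frc_mem_B {v : V} (h : v ∈ B) : frc A B v = v := if_pos h

lemma frc_spec (hb : (dstep A)^[b] B = Set.univ) {v : V} (hv : v ∉ B) :
    frc A B v ∈ (dstep A)^[tauF A B v - 1] B ∧ A (frc A B v) v ∧
    (∀ x, A (frc A B v) x → x ∉ (dstep A)^[tauF A B v - 1] B → x = v) ∧
    v ∉ (dstep A)^[tauF A B v - 1] B ∧ 1 ≤ tauF A B v := by
  have h0 : tauF A B v ≠ 0 := fun h => hv (mem_B_of_tau hb h)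
  have hnm : v ∉ (dstep A)^[tauF A B v - 1] B := notMem_of_lt_tau (by omega)
  have hm : v ∈ (dstep A)^[tauF A B v] B := mem_tau hb v
  have hm' : v ∈ dstep A ((dstep A)^[tauF A B v - 1] B) := by
    have e : tauF A B v = (tauF A B v - 1) + 1 := by omega
    rw [e, Function.iterate_succ_apply'] at hm
    exact hm
  have hE : Espec A B v := by
    rcases hm' with h | h
    · exact absurd h hnm
    · exact h
  have hfrc : frc A B v = hE.choose := by rw [frc, if_neg hv, dif_pos hE]
  rw [hfrc]
  exact ⟨hE.choose_spec.1, hE.choose_spec.2.1, hE.choose_spec.2.2, hnm, by omega⟩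

lemma tau_frc_lt (hb : (dstep A)^[b] B = Set.univ) {v : V} (hv : v ∉ B) :
    tauF A B (frc A B v) < tauF A B v := by
  obtain ⟨h1, -, -, -, h5⟩ := frc_spec hb hv
  have := tau_le_of_mem h1
  omega

lemma frc_inj_aux (hb : (dstep A)^[b] B = Set.univ) {v w : V} (hv : v ∉ B)
    (hw : w ∉ B) (hvw : tauF A B v ≤ tauF A B w) (h : frc A B v = frc A B w) :
    w = v := by
  obtain ⟨-, -, huniq, -, h1v⟩ := frc_spec hb hv
  obtain ⟨-, hAw, -, hnw, h1w⟩ := frc_spec hb hw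
  refine huniq w (by rw [h]; exact hAw) ?_
  intro hm
  exact hnw (iter_le A B (by omega) hm)

lemma frc_inj (hb : (dstep A)^[b] B = Set.univ) {v w : V} (hv : v ∉ B)
    (hw : w ∉ B) (h : frc A B v = frc A B w) : v = w := by
  rcases le_total (tauF A B v) (tauF A B w) with hh | hh
  · exact (frc_inj_aux hb hv hw hh h).symm
  · exact frc_inj_aux hb hw hv hh h.symm

variable (A B)

noncomputable def rootF (v : V) : V := (frc A B)^[tauF A B v] v

variable {A B}

lemma iter_frc_mem_B (hb : (dstep A)^[b] B = Set.univ) :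
    ∀ (k : ℕ) (v : V), tauF A B v ≤ k → (frc A B)^[k] v ∈ B := by
  intro k
  induction k with
  | zero =>
      intro v hv
      rw [Function.iterate_zero_apply]
      exact mem_B_of_tau hb (by omega)
  | succ k ih =>
      intro v hv
      rw [Function.iterate_succ_apply]
      by_cases hvB : v ∈ B
      · rw [frc_mem_B hvB]; exact ih v (by rw [tau_eq_zero hvB]; omega)
      · exact ih _ (by have := tau_frc_lt hb hvB; omega)

lemma iter_frc_fix {v : V} (h : v ∈ B) : ∀ k, (frc A B)^[k] v = v := by
  intro k
  induction k with
  | zero => rfl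
  | succ k ih => rw [Function.iterate_succ_apply, frc_mem_B h, ih]

lemma iter_frc_stab (hb : (dstep A)^[b] B = Set.univ) {v : V} {k k' : ℕ}
    (h1 : tauF A B v ≤ k) (h2 : k ≤ k') :
    (frc A B)^[k'] v = (frc A B)^[k] v := by
  have e : k' = (k' - k) + k := by omega
  rw [e, Function.iterate_add_apply]
  exact iter_frc_fix (iter_frc_mem_B hb k v h1) _

lemma root_frc (hb : (dstep A)^[b] B = Set.univ) {v : V} (hv : v ∉ B) :
    rootF A B (frc A B v) = rootF A B v := by
  obtain ⟨h1, -, -, -, h5⟩ := frc_spec hb hv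
  have htf : tauF A B (frc A B v) ≤ tauF A B v - 1 := tau_le_of_mem h1
  unfold rootF
  calc (frc A B)^[tauF A B (frc A B v)] (frc A B v)
      = (frc A B)^[tauF A B v - 1] (frc A B v) := (iter_frc_stab hb le_rfl htf).symm
    _ = (frc A B)^[(tauF A B v - 1) + 1] v := by rw [Function.iterate_succ_apply]
    _ = (frc A B)^[tauF A B v] v := by rw [show tauF A B v - 1 + 1 = tauF A B v by omega]

lemma root_mem_B (hb : (dstep A)^[b] B = Set.univ) {v : V} (hv : v ∈ B) :
    rootF A B v = v := by
  unfold rootF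
  exact iter_frc_fix hv _

variable (A B)

open scoped Classical in
noncomputable def phiF (e : V) : ℕ → V
  | 0 => e
  | j + 1 =>
      if h : ∃ w, frc A B w = phiF e j ∧ w ∉ B ∧ tauF A B w ≤ j + 1 then h.choose
      else phiF e j

variable {A B}

open scoped Classical in
lemma phiF_succ (e : V) (j : ℕ) :
    phiF A B e (j + 1) =
      if h : ∃ w, frc A B w = phiF A B e j ∧ w ∉ B ∧ tauF A B w ≤ j + 1 then h.choose
      else phiF A B e j := rfl

lemma phi_move (e : V) (j : ℕ) :
    phiF A B e (j + 1) = phiF A B e j ∨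
      (frc A B (phiF A B e (j + 1)) = phiF A B e j ∧ phiF A B e (j + 1) ∉ B ∧
        tauF A B (phiF A B e (j + 1)) ≤ j + 1) := by
  rw [phiF_succ]
  by_cases h : ∃ w, frc A B w = phiF A B e j ∧ w ∉ B ∧ tauF A B w ≤ j + 1
  · rw [dif_pos h]
    exact Or.inr ⟨h.choose_spec.1, h.choose_spec.2.1, h.choose_spec.2.2⟩
  · rw [dif_neg h]
    exact Or.inl rfl

lemma tau_phi_le {e : V} (he : e ∈ B) : ∀ j, tauF A B (phiF A B e j) ≤ j := by
  intro j
  induction j with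
  | zero => exact le_of_eq (tau_eq_zero he)
  | succ j ih =>
      rcases phi_move (A := A) (B := B) e j with h | h
      · rw [h]; omega
      · exact h.2.2

lemma phi_strict (hb : (dstep A)^[b] B = Set.univ) {e : V} {j : ℕ}
    (h : phiF A B e (j + 1) ≠ phiF A B e j) :
    tauF A B (phiF A B e j) < tauF A B (phiF A B e (j + 1)) := by
  rcases phi_move (A := A) (B := B) e j with hh | hh
  · exact absurd hh h
  · have := tau_frc_lt hb hh.2.1
    rw [hh.1] at this
    exact this

lemma phi_mono (hb : (dstep A)^[b] B = Set.univ) {e : V} {j k : ℕ} (h : j ≤ k) :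
    tauF A B (phiF A B e j) ≤ tauF A B (phiF A B e k) := by
  induction k, h using Nat.le_induction with
  | base => exact le_rfl
  | succ k hk ih =>
      by_cases hh : phiF A B e (k + 1) = phiF A B e k
      · rw [hh]; exact ih
      · have := phi_strict hb hh; omega

lemma exists_move {e : V} {j k : ℕ} (hjk : j ≤ k) (h : phiF A B e j ≠ phiF A B e k) :
    ∃ m, j ≤ m ∧ m < k ∧ phiF A B e (m + 1) ≠ phiF A B e m := by
  induction k, hjk using Nat.le_induction with
  | base => exact absurd rfl h
  | succ k hk ih =>
      by_cases he : phiF A B e (k + 1) = phiF A B e k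
      · obtain ⟨m, h1, h2, h3⟩ := ih (by rw [he] at h; exact h)
        exact ⟨m, h1, by omega, h3⟩
      · exact ⟨k, hk, by omega, he⟩

lemma phi_convex (hb : (dstep A)^[b] B = Set.univ) {e : V} {j j' j'' : ℕ}
    (h1 : j ≤ j') (h2 : j' ≤ j'') (h : phiF A B e j = phiF A B e j'') :
    phiF A B e j' = phiF A B e j := by
  by_contra hne
  obtain ⟨m, hm1, hm2, hm3⟩ := exists_move h1 (fun hh => hne hh.symm)
  have s1 : tauF A B (phiF A B e m) < tauF A B (phiF A B e (m + 1)) := phi_strict hb hm3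
  have s2 : tauF A B (phiF A B e j) ≤ tauF A B (phiF A B e m) := phi_mono hb hm1
  have s3 : tauF A B (phiF A B e (m + 1)) ≤ tauF A B (phiF A B e j'') := phi_mono hb (by omega)
  rw [← h] at s3
  omega

lemma phi_stall (hb : (dstep A)^[b] B = Set.univ) {e u v : V} {m0 : ℕ}
    (hu : phiF A B e m0 = u) (hv : v ∉ B) (hfv : frc A B v = u) :
    ∀ m, m0 ≤ m → m < tauF A B v → phiF A B e m = u := by
  intro m hm
  induction m, hm using Nat.le_induction with
  | base => exact fun _ => hu
  | succ m hm ih =>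
      intro hlt
      have hm' : phiF A B e m = u := ih (by omega)
      rw [phiF_succ]
      by_cases h : ∃ w, frc A B w = phiF A B e m ∧ w ∉ B ∧ tauF A B w ≤ m + 1
      · exfalso
        have hc := h.choose_spec
        have hcv : h.choose = v := frc_inj hb hc.2.1 hv (by rw [hc.1, hm', hfv])
        rw [hcv] at hc
        omega
      · rw [dif_neg h]; exact hm'

lemma phi_surj (hb : (dstep A)^[b] B = Set.univ) :
    ∀ v : V, ∃ e ∈ B, phiF A B e (tauF A B v) = v := by
  suffices H : ∀ (n : ℕ) (v : V), tauF A B v = n → ∃ e ∈ B, phiF A B e (tauF A B v) = v by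
    exact fun v => H _ v rfl
  intro n
  induction n using Nat.strong_induction_on with
  | _ n ih =>
      intro v hn
      by_cases hv : v ∈ B
      · refine ⟨v, hv, ?_⟩
        rw [tau_eq_zero hv]
        rfl
      · obtain ⟨hmem, hA, huniq, hnm, h1⟩ := frc_spec hb hv
        have hlt : tauF A B (frc A B v) < tauF A B v := tau_frc_lt hb hv
        obtain ⟨e, heB, he⟩ := ih (tauF A B (frc A B v)) (by omega) (frc A B v) rfl
        have hpred : phiF A B e (tauF A B v - 1) = frc A B v :=
          phi_stall hb he hv rfl _ (by omega) (by omega)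
        have hstep : phiF A B e ((tauF A B v - 1) + 1) = v := by
          rw [phiF_succ]
          have hex : ∃ w, frc A B w = phiF A B e (tauF A B v - 1) ∧ w ∉ B ∧
              tauF A B w ≤ (tauF A B v - 1) + 1 := ⟨v, by rw [hpred], hv, by omega⟩
          rw [dif_pos hex]
          exact frc_inj hb hex.choose_spec.2.1 hv (by rw [hex.choose_spec.1, hpred])
        refine ⟨e, heB, ?_⟩
        rw [show tauF A B v = (tauF A B v - 1) + 1 by omega]
        exact hstep

lemma root_phi (hb : (dstep A)^[b] B = Set.univ) {e : V} (he : e ∈ B) :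
    ∀ j, rootF A B (phiF A B e j) = e := by
  intro j
  induction j with
  | zero => exact root_mem_B hb he
  | succ j ih =>
      rcases phi_move (A := A) (B := B) e j with h | h
      · rw [h]; exact ih
      · have := root_frc hb h.2.1
        rw [h.1] at this
        rw [← this]; exact ih

lemma phi_occ (hb : (dstep A)^[b] B = Set.univ) {e x : V} (hx : phiF A B e (tauF A B x) = x) :
    (∀ m, tauF A B x ≤ m → m ≤ b → phiF A B e m = x) ∨
    (∃ m, tauF A B x ≤ m ∧ m + 1 ≤ b ∧
      (∀ m', tauF A B x ≤ m' → m' ≤ m → phiF A B e m' = x) ∧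
      phiF A B e (m + 1) ≠ x) := by
  have htx : tauF A B x ≤ b := tau_le hb x
  by_cases hend : phiF A B e b = x
  · left
    intro m h1 h2
    have := phi_convex hb h1 h2 (hx.trans hend.symm)
    rw [this, hx]
  · right
    have hlt : tauF A B x < b := lt_of_le_of_ne htx (fun h => hend (h ▸ hx))
    have hwit : b - 1 ∈ {m | tauF A B x ≤ m ∧ phiF A B e (m + 1) ≠ x} := by
      constructor
      · omega
      · rw [show b - 1 + 1 = b by omega]; exact hend
    set m0 := sInf {m | tauF A B x ≤ m ∧ phiF A B e (m + 1) ≠ x} with hm0def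
    have hm0 : m0 ∈ {m | tauF A B x ≤ m ∧ phiF A B e (m + 1) ≠ x} :=
      Nat.sInf_mem ⟨b - 1, hwit⟩
    have hub : m0 ≤ b - 1 := Nat.sInf_le hwit
    have hocc : ∀ m', tauF A B x ≤ m' → m' ≤ m0 → phiF A B e m' = x := by
      intro m' h1
      induction m', h1 using Nat.le_induction with
      | base => exact fun _ => hx
      | succ m' hm' ih =>
          intro h2
          have hnot : m' ∉ {m | tauF A B x ≤ m ∧ phiF A B e (m + 1) ≠ x} :=
            Nat.notMem_of_lt_sInf (by omega)
          simp only [Set.mem_setOf_eq, not_and, not_not] at hnot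
          exact hnot hm'
    exact ⟨m0, hm0.1, by omega, hocc, hm0.2⟩

end Aux

/-- Characterization of digraphs with throttling number at most `t`. -/
theorem stmt8 {V : Type*} [Fintype V] (A : V → V → Prop) (hirr : Irreflexive A)
    (t : ℕ) (ht : 0 < t) :
    (∀ B : Set V, IsZFS A B → B.ncard + dpt A B ≤ t →
      ObtainedFromH A B.ncard (t - B.ncard)) ∧
    (∀ a b : ℕ, 1 ≤ a → a + b = t → ObtainedFromH A a b → dth A ≤ t) := by
  constructor
  · -- Direction 1
    intro B hZ hle
    classical
    set b := t - B.ncard with hbdef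
    have hdpt : (dstep A)^[dpt A B] B = Set.univ := Nat.sInf_mem hZ
    have hdle : dpt A B ≤ b := by omega
    have hb : (dstep A)^[b] B = Set.univ := by
      apply Set.eq_univ_of_univ_subset
      rw [← hdpt]
      exact iter_le A B hdle
    have hBfin : B.Finite := Set.toFinite B
    haveI : Fintype ↥B := hBfin.fintype
    have hcard : Fintype.card ↥B = B.ncard := by
      rw [Set.ncard_eq_toFinset_card']
      exact (Set.toFinset_card B).symm
    set a := B.ncard with hadef
    let e : Fin a ≃ ↥B := (Fintype.equivFinOfCardEq hcard).symm
    let Φ : Fin a × Fin (b + 1) → V := fun p => phiF A B ((e p.1 : V)) (p.2 : ℕ)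
    have hΦdef : ∀ p : Fin a × Fin (b + 1), Φ p = phiF A B ((e p.1 : V)) (p.2 : ℕ) :=
      fun _ => rfl
    have hΦroot : ∀ p : Fin a × Fin (b + 1), rootF A B (Φ p) = (e p.1 : V) :=
      fun p => root_phi hb (e p.1).2 _
    have hrow : ∀ p q, Φ p = Φ q → p.1 = q.1 := by
      intro p q h
      have h2 : (e p.1 : V) = (e q.1 : V) := by rw [← hΦroot p, ← hΦroot q, h]
      exact e.injective (Subtype.coe_injective h2)
    refine ⟨Φ, ?_, hrow, ?_, ?_, ?_⟩
    · -- surjectivity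
      intro v
      obtain ⟨ex, hexB, hex⟩ := phi_surj hb v
      refine ⟨(e.symm ⟨ex, hexB⟩, ⟨tauF A B v, by have := tau_le hb v; omega⟩), ?_⟩
      rw [hΦdef]
      simp only [Equiv.apply_symm_apply]
      exact hex
    · -- convexity
      intro p q r hpq hr1 h1 h2
      have hq1 : p.1 = q.1 := hrow _ _ hpq
      rw [hΦdef, hΦdef, hr1]
      have hpq' : phiF A B (e p.1 : V) (p.2 : ℕ) = phiF A B (e p.1 : V) (q.2 : ℕ) := by
        rw [hΦdef, hΦdef] at hpq
        rw [← hq1] at hpq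
        exact hpq
      exact phi_convex hb h1 h2 hpq'
    · -- arcs map to HArcs
      intro x y hxy
      have hne : x ≠ y := fun h => hirr y (h ▸ hxy)
      obtain ⟨ex, hexB, hex⟩ := phi_surj hb x
      obtain ⟨ey, heyB, hey⟩ := phi_surj hb y
      set ix := e.symm ⟨ex, hexB⟩ with hixdef
      set iy := e.symm ⟨ey, heyB⟩ with hiydef
      have hixv : (e ix : V) = ex := by rw [hixdef, Equiv.apply_symm_apply]
      have hiyv : (e iy : V) = ey := by rw [hiydef, Equiv.apply_symm_apply]
      have htx : tauF A B x ≤ b := tau_le hb x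
      have hty : tauF A B y ≤ b := tau_le hb y
      have hpx : phiF A B (e ix : V) (tauF A B x) = x := by rw [hixv]; exact hex
      have hpy : phiF A B (e iy : V) (tauF A B y) = y := by rw [hiyv]; exact hey
      rcases le_or_gt (tauF A B y) (tauF A B x) with hc | hc
      · refine ⟨(ix, ⟨tauF A B x, by omega⟩), (iy, ⟨tauF A B y, by omega⟩),
          hpx, hpy, ?_, ?_⟩
        · show phiF A B (e ix : V) (tauF A B x) ≠ phiF A B (e iy : V) (tauF A B y)
          rw [hpx, hpy]; exact hne
        · refine ⟨fun hpq => hne ?_, Or.inl hc⟩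
          have h1 : ix = iy := congrArg Prod.fst hpq
          have h2 : tauF A B x = tauF A B y :=
            congrArg (fun r : Fin a × Fin (b + 1) => (r.2 : ℕ)) hpq
          rw [h1, h2] at hpx
          exact hpx.symm.trans hpy
      · rcases phi_occ hb hpx with hocc | ⟨m, hm1, hm2, hocc, hmove⟩
        · have hpyx : phiF A B (e ix : V) (tauF A B y) = x :=
            hocc _ (by omega) (by omega)
          refine ⟨(ix, ⟨tauF A B y, by omega⟩), (iy, ⟨tauF A B y, by omega⟩),
            hpyx, hpy, ?_, ?_⟩
          · show phiF A B (e ix : V) (tauF A B y) ≠ phiF A B (e iy : V) (tauF A B y)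
            rw [hpyx, hpy]
            exact hne
          · refine ⟨fun hpq => hne ?_, Or.inl le_rfl⟩
            have h1 : ix = iy := congrArg Prod.fst hpq
            rw [h1] at hpyx
            exact hpyx.symm.trans hpy
        · have hpm : phiF A B (e ix : V) m = x := hocc m hm1 le_rfl
          have hmv : phiF A B (e ix : V) (m + 1) ≠ phiF A B (e ix : V) m := by
            rw [hpm]; exact hmove
          rcases phi_move (A := A) (B := B) (e ix : V) m with hst | ⟨hfrc, hvB, htv⟩
          · exact absurd hst hmv
          · have hfrcx : frc A B (phiF A B (e ix : V) (m + 1)) = x := by rw [hfrc, hpm]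
            obtain ⟨-, -, huniq, -, h1v⟩ := frc_spec hb hvB
            by_cases hy : y ∈ (dstep A)^[tauF A B (phiF A B (e ix : V) (m + 1)) - 1] B
            · have hty' : tauF A B y ≤ m := by
                have := tau_le_of_mem hy; omega
              have hpyx : phiF A B (e ix : V) (tauF A B y) = x :=
                hocc _ (by omega) (by omega)
              refine ⟨(ix, ⟨tauF A B y, by omega⟩), (iy, ⟨tauF A B y, by omega⟩),
                hpyx, hpy, ?_, ?_⟩
              · show phiF A B (e ix : V) (tauF A B y) ≠ phiF A B (e iy : V) (tauF A B y)
                rw [hpyx, hpy]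
                exact hne
              · refine ⟨fun hpq => hne ?_, Or.inl le_rfl⟩
                have h1 : ix = iy := congrArg Prod.fst hpq
                rw [h1] at hpyx
                exact hpyx.symm.trans hpy
            · have hyv : y = phiF A B (e ix : V) (m + 1) :=
                huniq y (by rw [hfrcx]; exact hxy) hy
              refine ⟨(ix, ⟨m, by omega⟩), (ix, ⟨m + 1, by omega⟩),
                hpm, hyv.symm, ?_, ?_⟩
              · show phiF A B (e ix : V) m ≠ phiF A B (e ix : V) (m + 1)
                exact fun h => hmv h.symm
              · refine ⟨fun hpq => ?_, Or.inr ⟨rfl, rfl⟩⟩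
                have h2 : m = m + 1 :=
                  congrArg (fun r : Fin a × Fin (b + 1) => (r.2 : ℕ)) hpq
                omega
    · -- path arcs
      rintro p q ⟨h1, h2⟩
      have hq : Φ q = phiF A B (e p.1 : V) ((p.2 : ℕ) + 1) := by
        rw [hΦdef, ← h1, h2]
      rw [hq, hΦdef]
      rcases phi_move (A := A) (B := B) (e p.1 : V) (p.2 : ℕ) with hst | ⟨hfrc, hvB, -⟩
      · exact Or.inl hst.symm
      · right
        have hA := (frc_spec hb hvB).2.1
        rw [hfrc] at hA
        exact hA
  · -- Direction 2
    rintro a b ha hab ⟨φ, hsurj, hrow, hconv, harc, hpath⟩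
    classical
    set B : Set V := Set.range (fun i : Fin a => φ (i, ⟨0, Nat.succ_pos b⟩)) with hBdef
    have hS0 : φ '' {p | (p.2 : ℕ) ≤ 0} = B := by
      apply Set.Subset.antisymm
      · rintro v ⟨p, hp, rfl⟩
        simp only [Set.mem_setOf_eq] at hp
        have hp0 : p = (p.1, ⟨0, Nat.succ_pos b⟩) := Prod.ext rfl (Fin.ext (by simpa using hp))
        exact ⟨p.1, congrArg φ hp0.symm⟩
      · rintro v ⟨i, rfl⟩
        exact ⟨(i, ⟨0, Nat.succ_pos b⟩), show ((⟨0, Nat.succ_pos b⟩ : Fin (b+1)) : ℕ) ≤ 0 from le_rfl, rfl⟩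
    have hstep : ∀ j, φ '' {p | (p.2 : ℕ) ≤ j + 1} ⊆ dstep A (φ '' {p | (p.2 : ℕ) ≤ j}) := by
      intro j w hw
      obtain ⟨q, hq, rfl⟩ := hw
      simp only [Set.mem_setOf_eq] at hq
      by_cases hwS : φ q ∈ φ '' {p | (p.2 : ℕ) ≤ j}
      · exact Or.inl hwS
      · have hq2 : (q.2 : ℕ) = j + 1 := by
          by_contra hcon
          exact hwS ⟨q, show (q.2 : ℕ) ≤ j by omega, rfl⟩
        have hjb : j + 1 ≤ b := by have := q.2.isLt; omega
        have hu : φ (q.1, (⟨j, by omega⟩ : Fin (b + 1))) ∈ φ '' {p | (p.2 : ℕ) ≤ j} :=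
          ⟨(q.1, ⟨j, by omega⟩), show ((⟨j, by omega⟩ : Fin (b+1)) : ℕ) ≤ j from le_rfl, rfl⟩
        have hlate : ∀ p', φ p' = φ (q.1, (⟨j, by omega⟩ : Fin (b + 1))) →
            (p'.2 : ℕ) ≤ j := by
          intro p' hp'
          by_contra hcon
          push_neg at hcon
          have := hconv (q.1, (⟨j, by omega⟩ : Fin (b + 1))) p' q hp'.symm rfl
            (show j ≤ (q.2 : ℕ) by omega) (show (q.2 : ℕ) ≤ (p'.2 : ℕ) by omega)
          exact hwS (by rw [this]; exact hu)
        have hApath : A (φ (q.1, (⟨j, by omega⟩ : Fin (b + 1)))) (φ q) := by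
          rcases hpath (q.1, (⟨j, by omega⟩ : Fin (b + 1))) q
            ⟨rfl, show (q.2 : ℕ) = j + 1 from hq2⟩ with hEq | hA
          · exact absurd (by rw [← hEq]; exact hu) hwS
          · exact hA
        refine Or.inr ⟨φ (q.1, (⟨j, by omega⟩ : Fin (b + 1))), hu, hApath, ?_⟩
        intro x hux hxS
        obtain ⟨p', q', hp'u, hq'x, hne', hpq', hH⟩ := harc _ x hux
        have hp2 : (p'.2 : ℕ) ≤ j := hlate p' hp'u
        rcases hH with hle | ⟨he1, he2⟩
        · exact absurd (⟨q', show (q'.2 : ℕ) ≤ j by omega, hq'x⟩ :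
            x ∈ φ '' {p | (p.2 : ℕ) ≤ j}) hxS
        · by_cases hq'2 : (q'.2 : ℕ) ≤ j
          · exact absurd ⟨q', hq'2, hq'x⟩ hxS
          · have hq'v : (q'.2 : ℕ) = j + 1 := by omega
            have hp'1 : p'.1 = q.1 := hrow p' (q.1, ⟨j, by omega⟩) hp'u
            have hqq : q' = q := Prod.ext (by rw [← he1, hp'1]) (Fin.ext (by omega))
            rw [← hq'x, hqq]
    have hiter : ∀ j, φ '' {p | (p.2 : ℕ) ≤ j} ⊆ (dstep A)^[j] B := by
      intro j
      induction j with
      | zero =>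
          rw [hS0, Function.iterate_zero_apply]
      | succ j ih =>
          refine (hstep j).trans ((dstep_mono A ih).trans ?_)
          rw [Function.iterate_succ_apply']
    have hZuniv : (dstep A)^[b] B = Set.univ := by
      apply Set.Subset.antisymm (Set.subset_univ _)
      intro v _
      obtain ⟨p, rfl⟩ := hsurj v
      exact hiter b ⟨p, show (p.2 : ℕ) ≤ b by have := p.2.isLt; omega, rfl⟩
    have hzfs : IsZFS A B := ⟨b, hZuniv⟩
    have hd : dpt A B ≤ b := Nat.sInf_le hZuniv
    have hcard : B.ncard ≤ a := by
      rw [hBdef, ← Set.image_univ]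
      refine le_trans (Set.ncard_image_le Set.finite_univ) ?_
      rw [Set.ncard_univ]
      simp [Nat.card_eq_fintype_card]
    have hdth : dth A ≤ B.ncard + dpt A B := Nat.sInf_le ⟨B, hzfs, rfl⟩
    omega
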